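/- arXiv:1404.3319 — 2 statements merged into one kernel-verified Lean document; each statement's English description precedes it below -/
import Mathlib

section
/- Let I be an ideal of C and let t be a positive integer. If a^t ∈ IR*, then a^t ∈ I. -/
set_option synthInstance.maxHeartbeats 1000000
set_option maxHeartbeats 1000000
noncomputable section
namespace HRWGen

variable (R : Type) [CommRing R] [IsDomain R] [IsNoetherianRing R] (a : R)

/-- `R* `, the `(a)`-adic completion of `R`. -/
abbrev RstarG := AdicCompletion (Ideal.span {a}) R

/-- The image of `a` in `R*`. -/
def aS : RstarG R a := algebraMap R (RstarG R a) a

variable {h : ℕ} (cc : Fin h → ℕ → R) (tau : Fin h → RstarG R a)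
  (taue : Fin h → ℕ → RstarG R a)

/-- `U_r = R[τ_{1r}, …, τ_{hr}]`. -/
def Ur (r : ℕ) : Subalgebra R (RstarG R a) :=
  Algebra.adjoin R (Set.range fun i => taue i r)

/-- `C_r = (1 + aU_r)^{-1} U_r`, realized inside `R*` by adjoining the inverses of the
elements `1 + a·u`, `u ∈ U_r` (all of which are units of the `(a)`-adically complete
ring `R*`). -/
def Cr (r : ℕ) : Subalgebra R (RstarG R a) :=
  Algebra.adjoin R ((Set.range fun i => taue i r) ∪
    {w | ∃ u ∈ Algebra.adjoin R (Set.range fun i => taue i r),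
      w * (1 + aS R a * u) = 1})

/-- `U = ∪_r U_r`. -/
def UU : Subalgebra R (RstarG R a) := ⨆ r, Ur R a taue r

/-- `C = ∪_r C_r`. -/
def CC : Subalgebra R (RstarG R a) := ⨆ r, Cr R a taue r

/-- The hypotheses: `a` is a nonzero nonunit, `h ≥ 1`, the `τ_i` are algebraically
independent over `R` (equivalently over `K`), `τ_{i0} = τ_i`, and the endpieces satisfy
`a^r τ_{ir} = τ_i - Σ_{j=1}^r c_{ij} a^j` (in particular `τ_i = Σ_{j≥1} c_{ij} a^j ∈ aR[[a]]`). -/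
structure SetupG (cc : Fin h → ℕ → R) (tau : Fin h → RstarG R a)
    (taue : Fin h → ℕ → RstarG R a) : Prop where
  hh : 0 < h
  ha0 : a ≠ 0
  hau : ¬ IsUnit a
  hind : AlgebraicIndependent R tau
  he0 : ∀ i, taue i 0 = tau i
  hrec : ∀ i r, aS R a ^ r * taue i r =
    tau i - algebraMap R (RstarG R a) (∑ j ∈ Finset.Icc 1 r, cc i j * a ^ j)


section Structural
set_option linter.unusedSectionVars false
open AdicCompletion

variable {R a}

lemma mem_smul_top_iff (n : ℕ) (x : R) :
    x ∈ (Ideal.span {a} ^ n • ⊤ : Submodule R R) ↔ a ^ n ∣ x := by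
  have h : (Ideal.span {a} ^ n • ⊤ : Ideal R) = Ideal.span {a} ^ n := by ext y; simp
  rw [show (Ideal.span {a} ^ n • ⊤ : Submodule R R) = (Ideal.span {a} ^ n • ⊤ : Ideal R) from rfl,
    h, Ideal.span_singleton_pow, Ideal.mem_span_singleton]

lemma aS_pow (n : ℕ) : aS R a ^ n = algebraMap R (RstarG R a) (a ^ n) := by
  simp [aS, map_pow]

lemma of_val (c : R) (n : ℕ) : (algebraMap R (RstarG R a) c).val n =
    Submodule.mkQ (Ideal.span {a} ^ n • ⊤ : Submodule R R) c := rfl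

lemma mk_val (f : AdicCauchySequence (Ideal.span {a}) R) (n : ℕ) :
    (AdicCompletion.mk _ R f).val n =
      Submodule.mkQ (Ideal.span {a} ^ n • ⊤ : Submodule R R) (f n) := rfl

lemma mkQ_mul (n : ℕ) (x y : R) :
    (Submodule.mkQ (Ideal.span {a} ^ n • ⊤ : Submodule R R) x) *
    (Submodule.mkQ (Ideal.span {a} ^ n • ⊤ : Submodule R R) y) =
    Submodule.mkQ (Ideal.span {a} ^ n • ⊤ : Submodule R R) (x * y) := rfl

/-- divisibility version of the Cauchy property -/
lemma cauchy_dvd (f : AdicCauchySequence (Ideal.span {a}) R) {m n : ℕ} (hmn : m ≤ n) :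
    a ^ m ∣ f n - f m := by
  have := f.property hmn
  rw [SModEq] at this
  have h2 : f n - f m ∈ (Ideal.span {a} ^ m • ⊤ : Submodule R R) :=
    (Submodule.Quotient.eq _).mp this.symm
  exact (mem_smul_top_iff m _).mp h2

/-- `a` is a nonzerodivisor on `R*`. -/
lemma aS_mul_cancel (ha : a ≠ 0) {y z : RstarG R a} (hyz : aS R a * y = aS R a * z) :
    y = z := by
  suffices hkey : ∀ u : RstarG R a, aS R a * u = 0 → u = 0 by
    have h0 : aS R a * (y - z) = 0 := by rw [mul_sub, hyz, sub_self]
    exact sub_eq_zero.mp (hkey _ h0)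
  intro u hu
  obtain ⟨f, rfl⟩ := AdicCompletion.mk_surjective _ R u
  ext n
  have hdvd : ∀ m, a ^ m ∣ a * f m := by
    intro m
    have hval := congrArg (fun z => z.val m) hu
    simp only [AdicCompletion.val_mul, AdicCompletion.val_zero] at hval
    rw [show (aS R a).val m * (AdicCompletion.mk _ R f).val m
        = Submodule.mkQ (Ideal.span {a} ^ m • ⊤ : Submodule R R) (a * f m) from rfl] at hval
    rw [Submodule.mkQ_apply, Pi.zero_apply, Submodule.Quotient.mk_eq_zero] at hval
    exact (mem_smul_top_iff m _).mp hval
  have h1 : a ^ n ∣ f (n + 1) := by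
    have := hdvd (n + 1)
    rw [pow_succ'] at this
    exact (mul_dvd_mul_iff_left ha).mp this
  have h2 : a ^ n ∣ f n := by
    have := cauchy_dvd f (Nat.le_succ n)
    have := dvd_sub h1 this
    simpa using this
  rw [mk_val, AdicCompletion.val_zero_apply, Submodule.mkQ_apply, Submodule.Quotient.mk_eq_zero]
  exact (mem_smul_top_iff n _).mpr h2

lemma aS_pow_mul_cancel (ha : a ≠ 0) (n : ℕ) {y z : RstarG R a}
    (hyz : aS R a ^ n * y = aS R a ^ n * z) : y = z := by
  induction n with
  | zero => simpa using hyz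
  | succ k ih =>
    apply ih
    apply aS_mul_cancel ha
    rw [← mul_assoc, ← pow_succ', hyz, ← mul_assoc, ← pow_succ']


/-- Density of `R` in `R*`: approximation modulo `a^n`. -/
lemma dense_of (ha : a ≠ 0) (x : RstarG R a) (n : ℕ) :
    ∃ c : R, ∃ y : RstarG R a, x = algebraMap R (RstarG R a) c + aS R a ^ n * y := by
  obtain ⟨f, rfl⟩ := AdicCompletion.mk_surjective _ R x
  have hdvd : ∀ m : ℕ, a ^ n ∣ f (n + m) - f n := fun m => cauchy_dvd f (Nat.le_add_right n m)
  choose g hg using hdvd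
  have hgc : ∀ m : ℕ, g m ≡ g (m + 1) [SMOD (Ideal.span {a} ^ m • ⊤ : Submodule R R)] := by
    intro m
    show Submodule.Quotient.mk (g m) = Submodule.Quotient.mk (g (m + 1))
    rw [Submodule.Quotient.eq, mem_smul_top_iff]
    have h1 : a ^ n * (g (m+1) - g m) = f (n + (m+1)) - f (n + m) := by
      rw [mul_sub, ← hg, ← hg]; ring
    have h2 : a ^ n * a ^ m ∣ a ^ n * (g (m+1) - g m) := by
      rw [h1, ← pow_add]
      exact cauchy_dvd f (by omega)
    have h3 := (mul_dvd_mul_iff_left (pow_ne_zero n ha)).mp h2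
    have h4 : g m - g (m+1) = -(g (m+1) - g m) := by ring
    rw [h4]
    exact dvd_neg.mpr h3
  refine ⟨f n, AdicCompletion.mk _ R (AdicCauchySequence.mk _ _ g hgc), ?_⟩
  ext m
  rw [AdicCompletion.val_add_apply, mk_val, of_val, aS_pow]
  rw [show (algebraMap R (RstarG R a) (a ^ n) *
      AdicCompletion.mk _ R (AdicCauchySequence.mk _ _ g hgc)).val m
    = Submodule.mkQ (Ideal.span {a} ^ m • ⊤ : Submodule R R) (a ^ n * g m) from rfl]
  rw [show (Submodule.mkQ (Ideal.span {a} ^ m • ⊤ : Submodule R R)) (f n) +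
      (Submodule.mkQ (Ideal.span {a} ^ m • ⊤ : Submodule R R)) (a ^ n * g m)
    = (Submodule.mkQ (Ideal.span {a} ^ m • ⊤ : Submodule R R)) (f n + a ^ n * g m) from rfl]
  rw [Submodule.mkQ_apply, Submodule.mkQ_apply, Submodule.Quotient.eq, mem_smul_top_iff]
  have hfm : f n + a ^ n * g m = f (n + m) := by linear_combination -hg m
  rw [hfm]
  have h5 := cauchy_dvd f (Nat.le_add_left m n)
  have h6 : f m - f (n + m) = -(f (n + m) - f m) := by ring
  rw [h6]
  exact dvd_neg.mpr h5

/-- Contraction: if `algebraMap c ∈ a^n R*` then `a^n ∣ c` in `R`. -/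
lemma contract_of (n : ℕ) (c : R) (y : RstarG R a)
    (hc : algebraMap R (RstarG R a) c = aS R a ^ n * y) : a ^ n ∣ c := by
  obtain ⟨g, rfl⟩ := AdicCompletion.mk_surjective _ R y
  have hval := congrArg (fun z => z.val n) hc
  rw [of_val, aS_pow] at hval
  rw [show (algebraMap R (RstarG R a) (a ^ n) * AdicCompletion.mk _ R g).val n
    = Submodule.mkQ (Ideal.span {a} ^ n • ⊤ : Submodule R R) (a ^ n * g n) from rfl] at hval
  rw [Submodule.mkQ_apply, Submodule.mkQ_apply, Submodule.Quotient.eq, mem_smul_top_iff] at hval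
  obtain ⟨u, hu⟩ := hval
  exact ⟨g n + u, by rw [mul_add, ← hu]; ring⟩

/-- every element of `1 + a R*` is invertible in `R*`. -/
lemma exists_inv (u : RstarG R a) : ∃ w : RstarG R a, w * (1 + aS R a * u) = 1 := by
  obtain ⟨g, rfl⟩ := AdicCompletion.mk_surjective _ R u
  set s : ℕ → R := fun n => ∑ k ∈ Finset.range n, (-(a * g n)) ^ k with hs
  have hcau : ∀ n, s n ≡ s (n + 1) [SMOD (Ideal.span {a} ^ n • ⊤ : Submodule R R)] := by
    intro n
    show Submodule.Quotient.mk (s n) = Submodule.Quotient.mk (s (n + 1))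
    rw [Submodule.Quotient.eq, mem_smul_top_iff, hs]
    simp only
    rw [Finset.sum_range_succ]
    rw [show (∑ k ∈ Finset.range n, (-(a * (g : ℕ → R) n)) ^ k) -
      ((∑ k ∈ Finset.range n, (-(a * g (n+1))) ^ k) + (-(a * g (n+1))) ^ n)
      = (∑ k ∈ Finset.range n, ((-(a * g n)) ^ k - (-(a * g (n+1))) ^ k)) + -((-(a * g (n+1))) ^ n) by
        rw [Finset.sum_sub_distrib]; ring]
    have h1 : a ^ n ∣ ∑ k ∈ Finset.range n, ((-(a * g n)) ^ k - (-(a * g (n+1))) ^ k) := by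
      apply Finset.dvd_sum
      intro k _
      have hd : a ^ n ∣ (-(a * g n)) - (-(a * g (n+1))) := by
        have hca := cauchy_dvd g (Nat.le_succ n)
        have h2 : (-(a * g n)) - (-(a * g (n+1))) = a * (g (n+1) - g n) := by ring
        rw [h2]
        exact Dvd.dvd.mul_left hca a
      exact dvd_trans hd (sub_dvd_pow_sub_pow _ _ k)
    have h2 : a ^ n ∣ -((-(a * g (n+1))) ^ n) := by
      rw [dvd_neg]
      have h3 : (-(a * g (n+1))) ^ n = (-1)^n * a^n * (g (n+1))^n := by rw [neg_pow, mul_pow]; ring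
      rw [h3]
      exact Dvd.dvd.mul_right (dvd_mul_left _ _) _
    exact dvd_add h1 h2
  refine ⟨AdicCompletion.mk _ R (AdicCauchySequence.mk _ _ s hcau), ?_⟩
  ext n
  rw [show (AdicCompletion.mk _ R (AdicCauchySequence.mk _ _ s hcau) *
      (1 + aS R a * AdicCompletion.mk _ R g)).val n
    = Submodule.mkQ (Ideal.span {a} ^ n • ⊤ : Submodule R R) (s n * (1 + a * g n)) from rfl]
  rw [AdicCompletion.val_one]
  rw [show (1 : R ⧸ (Ideal.span {a} ^ n • ⊤ : Submodule R R))
    = Submodule.mkQ (Ideal.span {a} ^ n • ⊤ : Submodule R R) 1 from rfl]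
  rw [Submodule.mkQ_apply, Submodule.mkQ_apply, Submodule.Quotient.eq, mem_smul_top_iff]
  have hgeo : s n * (1 + a * g n) - 1 = -(-(a * g n)) ^ n := by
    have := geom_sum_mul (-(a * g n)) n
    rw [hs]
    simp only
    linear_combination -this
  rw [hgeo]
  have : (-(a * g n)) ^ n = (-1)^n * a^n * (g n)^n := by rw [neg_pow, mul_pow]; ring
  rw [this, dvd_neg]
  exact Dvd.dvd.mul_right (dvd_mul_left _ _) _


variable {cc : Fin h → ℕ → R} {tau : Fin h → RstarG R a} {taue : Fin h → ℕ → RstarG R a}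

lemma taue_succ (hs : SetupG R a cc tau taue) (i : Fin h) (r : ℕ) :
    taue i r = aS R a * (taue i (r+1) + algebraMap R (RstarG R a) (cc i (r+1))) := by
  have h1 := hs.hrec i r
  have h2 := hs.hrec i (r+1)
  have hsum : (∑ j ∈ Finset.Icc 1 (r+1), cc i j * a ^ j)
      = (∑ j ∈ Finset.Icc 1 r, cc i j * a ^ j) + cc i (r+1) * a ^ (r+1) := by
    rw [← Finset.sum_Icc_succ_top (by omega : 1 ≤ r + 1)]
  apply aS_pow_mul_cancel hs.ha0 r
  rw [h1]
  have key : aS R a ^ r * (aS R a * (taue i (r+1) + algebraMap R (RstarG R a) (cc i (r+1))))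
      = aS R a ^ (r+1) * taue i (r+1)
        + algebraMap R (RstarG R a) (cc i (r+1) * a ^ (r+1)) := by
    have hof : algebraMap R (RstarG R a) (cc i (r+1) * a ^ (r+1))
        = algebraMap R (RstarG R a) (cc i (r+1)) * aS R a ^ (r+1) := by
      rw [map_mul, aS_pow]
    rw [hof]
    ring
  rw [key, h2, hsum, map_add]
  ring

lemma Ur_le_succ (hs : SetupG R a cc tau taue) (r : ℕ) :
    Ur R a taue r ≤ Ur R a taue (r+1) := by
  apply Algebra.adjoin_le
  rintro x ⟨i, rfl⟩
  simp only
  rw [taue_succ hs]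
  exact mul_mem (Subalgebra.algebraMap_mem _ a)
    (add_mem (Algebra.subset_adjoin ⟨i, rfl⟩) (Subalgebra.algebraMap_mem _ _))

lemma Ur_le_Cr (r : ℕ) : Ur R a taue r ≤ Cr R a taue r :=
  Algebra.adjoin_mono Set.subset_union_left

lemma Cr_le_succ (hs : SetupG R a cc tau taue) (r : ℕ) :
    Cr R a taue r ≤ Cr R a taue (r+1) := by
  apply Algebra.adjoin_le
  rintro x (⟨i, rfl⟩ | ⟨u, hu, hw⟩)
  · exact Ur_le_Cr (r+1) (Ur_le_succ hs r (Algebra.subset_adjoin ⟨i, rfl⟩))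
  · exact Algebra.subset_adjoin (Or.inr ⟨u, Ur_le_succ hs r hu, hw⟩)

lemma Cr_mono (hs : SetupG R a cc tau taue) : Monotone (Cr R a taue) :=
  monotone_nat_of_le_succ (Cr_le_succ hs)

lemma Cr_le_CC (r : ℕ) : Cr R a taue r ≤ CC R a taue := le_iSup _ r

lemma mem_CC_iff (hs : SetupG R a cc tau taue) {x : RstarG R a} :
    x ∈ CC R a taue ↔ ∃ r, x ∈ Cr R a taue r := by
  constructor
  · intro hx
    have hd : Directed (· ≤ ·) (Cr R a taue) := (Cr_mono hs).directed_le
    have := Subalgebra.coe_iSup_of_directed hd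
    have hx' : x ∈ (↑(⨆ r, Cr R a taue r) : Set (RstarG R a)) := hx
    rw [this] at hx'
    exact Set.mem_iUnion.mp hx'
  · rintro ⟨r, hr⟩
    exact Cr_le_CC r hr

/-- Every element of `C_r` has the form `u / (1 + a v)` with `u, v ∈ U_r`. -/
lemma Cr_form {r : ℕ} {x : RstarG R a} (hx : x ∈ Cr R a taue r) :
    ∃ u ∈ Ur R a taue r, ∃ v ∈ Ur R a taue r, ∃ w : RstarG R a,
      w * (1 + aS R a * v) = 1 ∧ x = u * w := by
  induction hx using Algebra.adjoin_induction with
  | mem x hx =>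
    rcases hx with ⟨i, rfl⟩ | ⟨u, hu, hw⟩
    · exact ⟨taue i r, Algebra.subset_adjoin ⟨i, rfl⟩, 0, zero_mem _, 1,
        by ring_nf, by ring⟩
    · exact ⟨1, one_mem _, u, hu, x, hw, (one_mul x).symm⟩
  | algebraMap c =>
    exact ⟨algebraMap R (RstarG R a) c, Subalgebra.algebraMap_mem _ _, 0, zero_mem _, 1,
      by ring_nf, by ring⟩
  | add x y hx hy ihx ihy =>
    obtain ⟨u₁, hu₁, v₁, hv₁, w₁, hw₁, rfl⟩ := ihx
    obtain ⟨u₂, hu₂, v₂, hv₂, w₂, hw₂, rfl⟩ := ihy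
    refine ⟨u₁ * (1 + aS R a * v₂) + u₂ * (1 + aS R a * v₁), ?_,
      v₁ + v₂ + aS R a * (v₁ * v₂), ?_, w₁ * w₂, ?_, ?_⟩
    · have haU : aS R a ∈ Ur R a taue r := Subalgebra.algebraMap_mem _ _
      exact add_mem (mul_mem hu₁ (add_mem (one_mem _) (mul_mem haU hv₂)))
        (mul_mem hu₂ (add_mem (one_mem _) (mul_mem haU hv₁)))
    · have haU : aS R a ∈ Ur R a taue r := Subalgebra.algebraMap_mem _ _
      exact add_mem (add_mem hv₁ hv₂) (mul_mem haU (mul_mem hv₁ hv₂))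
    · linear_combination (w₂ * (1 + aS R a * v₂)) * hw₁ + hw₂
    · linear_combination (-(u₁ * w₁)) * hw₂ + (-(u₂ * w₂)) * hw₁
  | mul x y hx hy ihx ihy =>
    obtain ⟨u₁, hu₁, v₁, hv₁, w₁, hw₁, rfl⟩ := ihx
    obtain ⟨u₂, hu₂, v₂, hv₂, w₂, hw₂, rfl⟩ := ihy
    refine ⟨u₁ * u₂, mul_mem hu₁ hu₂,
      v₁ + v₂ + aS R a * (v₁ * v₂), ?_, w₁ * w₂, ?_, by ring⟩
    · have haU : aS R a ∈ Ur R a taue r := Subalgebra.algebraMap_mem _ _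
      exact add_mem (add_mem hv₁ hv₂) (mul_mem haU (mul_mem hv₁ hv₂))
    · linear_combination (w₂ * (1 + aS R a * v₂)) * hw₁ + hw₂

/-- `1 + a c` is invertible in `C` for every `c ∈ C`. -/
lemma CC_unit (hs : SetupG R a cc tau taue) {x : RstarG R a} (hx : x ∈ CC R a taue) :
    ∃ w ∈ CC R a taue, w * (1 + aS R a * x) = 1 := by
  obtain ⟨r, hr⟩ := (mem_CC_iff hs).mp hx
  obtain ⟨u, hu, v, hv, w₁, hw₁, rfl⟩ := Cr_form hr
  obtain ⟨w₂, hw₂⟩ := exists_inv (v + u)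
  have hw₂mem : w₂ ∈ Cr R a taue r :=
    Algebra.subset_adjoin (Or.inr ⟨v + u, add_mem hv hu, hw₂⟩)
  refine ⟨(1 + aS R a * v) * w₂, ?_, ?_⟩
  · apply Cr_le_CC r
    exact mul_mem (add_mem (one_mem _) (mul_mem (Subalgebra.algebraMap_mem _ _) (Ur_le_Cr r hv)))
      hw₂mem
  · linear_combination (aS R a * u * w₂) * hw₁ + hw₂

/-- One-step decomposition `C_r ⊆ R + a C_{r+1}`. -/
lemma Cr_step (hs : SetupG R a cc tau taue) {r : ℕ} {x : RstarG R a}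
    (hx : x ∈ Cr R a taue r) :
    ∃ c : R, ∃ y ∈ Cr R a taue (r+1), x = algebraMap R (RstarG R a) c + aS R a * y := by
  induction hx using Algebra.adjoin_induction with
  | mem x hx =>
    rcases hx with ⟨i, rfl⟩ | ⟨u, hu, hw⟩
    · refine ⟨0, taue i (r+1) + algebraMap R (RstarG R a) (cc i (r+1)), ?_, ?_⟩
      · exact add_mem (Ur_le_Cr (r+1) (Algebra.subset_adjoin ⟨i, rfl⟩))
          (Subalgebra.algebraMap_mem _ _)
      · simpa using taue_succ hs i r
    · refine ⟨1, -(u * x), ?_, ?_⟩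
      · have hxC : x ∈ Cr R a taue (r+1) :=
          Cr_le_succ hs r (Algebra.subset_adjoin (Or.inr ⟨u, hu, hw⟩))
        have huC : u ∈ Cr R a taue (r+1) := Cr_le_succ hs r (Ur_le_Cr r hu)
        exact neg_mem (mul_mem huC hxC)
      · rw [map_one]
        linear_combination hw
  | algebraMap c => exact ⟨c, 0, zero_mem _, by simp⟩
  | add x y hx hy ihx ihy =>
    obtain ⟨c₁, y₁, hy₁, rfl⟩ := ihx
    obtain ⟨c₂, y₂, hy₂, rfl⟩ := ihy
    exact ⟨c₁ + c₂, y₁ + y₂, add_mem hy₁ hy₂, by rw [map_add]; ring⟩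
  | mul x y hx hy ihx ihy =>
    obtain ⟨c₁, y₁, hy₁, rfl⟩ := ihx
    obtain ⟨c₂, y₂, hy₂, rfl⟩ := ihy
    refine ⟨c₁ * c₂, algebraMap R (RstarG R a) c₁ * y₂ + algebraMap R (RstarG R a) c₂ * y₁
      + aS R a * (y₁ * y₂), ?_, ?_⟩
    · exact add_mem (add_mem (mul_mem (Subalgebra.algebraMap_mem _ _) hy₂)
        (mul_mem (Subalgebra.algebraMap_mem _ _) hy₁))
        (mul_mem (Subalgebra.algebraMap_mem _ _) (mul_mem hy₁ hy₂))
    · rw [map_mul]; ring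

/-- Iterated decomposition `C ⊆ R + a^n C`. -/
lemma CC_step_pow (hs : SetupG R a cc tau taue) (n : ℕ) {x : RstarG R a}
    (hx : x ∈ CC R a taue) :
    ∃ c : R, ∃ y ∈ CC R a taue, x = algebraMap R (RstarG R a) c + aS R a ^ n * y := by
  induction n with
  | zero => exact ⟨0, x, hx, by simp⟩
  | succ k ih =>
    obtain ⟨c, y, hy, rfl⟩ := ih
    obtain ⟨r, hr⟩ := (mem_CC_iff hs).mp hy
    obtain ⟨c', y', hy', rfl⟩ := Cr_step hs hr
    refine ⟨c + a ^ k * c', y', Cr_le_CC (r+1) hy', ?_⟩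
    rw [map_add, map_mul, ← aS_pow]
    ring

end Structural

theorem statement6 (R : Type) [CommRing R] [IsDomain R] [IsNoetherianRing R] (a : R)
    {h : ℕ} (cc : Fin h → ℕ → R) (tau : Fin h → RstarG R a)
    (taue : Fin h → ℕ → RstarG R a) (hs : SetupG R a cc tau taue)
    (I : Ideal ↥(CC R a taue)) (t : ℕ) (ht : 0 < t)
    -- if `a^t ∈ IR*` ...
    (hmem : aS R a ^ t ∈ Ideal.map ((CC R a taue).val).toRingHom I) :
    -- ... then `a^t ∈ I`
    ∀ w : ↥(CC R a taue), (w : RstarG R a) = aS R a ^ t → w ∈ I := by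
  intro w hw
  classical
  have hmem' : aS R a ^ t ∈ Ideal.span
      ((((CC R a taue).val).toRingHom : ↥(CC R a taue) → RstarG R a) '' I) := hmem
  obtain ⟨n, η, g, hsum⟩ := Submodule.mem_span_set'.mp hmem'
  have hg : ∀ i : Fin n, ∃ b : ↥(CC R a taue), b ∈ I ∧ (b : RstarG R a) = (g i : RstarG R a) := by
    intro i
    obtain ⟨b, hbI, hfb⟩ := (g i).2
    exact ⟨b, hbI, hfb⟩
  choose b hbI hbv using hg
  have hd : ∀ i : Fin n, ∃ dd : R, ∃ ρ : RstarG R a,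
      η i = algebraMap R (RstarG R a) dd + aS R a ^ (t+1) * ρ :=
    fun i => dense_of hs.ha0 (η i) (t+1)
  choose d ρ hdρ using hd
  set z : ↥(CC R a taue) := ∑ i, algebraMap R ↥(CC R a taue) (d i) * b i with hzdef
  have hzI : z ∈ I := Ideal.sum_mem I (fun i _ => I.mul_mem_left _ (hbI i))
  have hzval : (z : RstarG R a) = ∑ i, algebraMap R (RstarG R a) (d i) * (b i : RstarG R a) := by
    show (CC R a taue).val z = _
    rw [hzdef, map_sum]
    refine Finset.sum_congr rfl fun i _ => ?_
    rw [map_mul, AlgHom.commutes]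
    rfl
  have hsum' : aS R a ^ t = ∑ i, η i * (b i : RstarG R a) := by
    rw [← hsum]
    refine Finset.sum_congr rfl fun i _ => ?_
    rw [smul_eq_mul, hbv i]
  set σ : RstarG R a := ∑ i, ρ i * (b i : RstarG R a) with hσdef
  have hkey : (w : RstarG R a) - (z : RstarG R a) = aS R a ^ (t+1) * σ := by
    rw [hw, hzval, hσdef, hsum', Finset.mul_sum, ← Finset.sum_sub_distrib]
    refine Finset.sum_congr rfl fun i _ => ?_
    rw [hdρ i]
    ring
  obtain ⟨c, y, hyCC, hwzval⟩ := CC_step_pow hs (t+1) (sub_mem w.2 z.2)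
  have hofc : algebraMap R (RstarG R a) c = aS R a ^ (t+1) * (σ - y) := by
    linear_combination hkey - hwzval
  obtain ⟨c₀, hc₀⟩ := contract_of (t+1) c _ hofc
  set y' : RstarG R a := algebraMap R (RstarG R a) c₀ + y with hy'def
  have hy'CC : y' ∈ CC R a taue := add_mem (Subalgebra.algebraMap_mem _ _) hyCC
  have hcof : algebraMap R (RstarG R a) c = aS R a ^ (t+1) * algebraMap R (RstarG R a) c₀ := by
    rw [hc₀, map_mul, aS_pow]
  have hww : (w : RstarG R a) - (z : RstarG R a) = aS R a ^ (t+1) * y' := by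
    rw [hwzval, hcof, hy'def]
    ring
  have hzw : (z : RstarG R a) = (w : RstarG R a) * (1 - aS R a * y') := by
    have hpow : aS R a ^ (t+1) = aS R a * aS R a ^ t := by ring
    rw [hpow] at hww
    linear_combination (-1 : RstarG R a) * hww + (aS R a * y') * hw
  obtain ⟨winv, hwinvCC, hwinv⟩ := CC_unit hs (neg_mem hy'CC)
  set Wi : ↥(CC R a taue) := ⟨winv, hwinvCC⟩ with hWidef
  have hw_eq : w = z * Wi := by
    apply Subtype.ext
    have hcoe : ((z * Wi : ↥(CC R a taue)) : RstarG R a) = (z : RstarG R a) * winv := rfl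
    rw [hcoe]
    linear_combination (-winv) * hzw + (-((w : RstarG R a))) * hwinv
  rw [hw_eq]
  exact Ideal.mul_mem_right Wi I hzI

end HRWGen
end
end

section
/- Let S be a subring of a ring T and let b ∈ S be a nonzerodivisor of both S and T such that bS = bT ∩ S and the inclusion induces an isomorphism S/bS = T/bT. Then: (1) T[1/b] is flat over S if and only if T is flat over S; (2) if T and S[1/b] are both Noetherian and T is flat over S, then S is Noetherian. -/
set_option synthInstance.maxHeartbeats 1000000
set_option maxHeartbeats 1000000
noncomputable section
namespace HRW18

open TensorProduct LinearMap

/-- If `1 ⊗ x = 0` in `Localization p ⊗ N`, then `x` is `p`-torsion. -/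
lemma smul_eq_zero_of_tmul_eq_zero {R : Type*} [CommRing R] (p : Submonoid R)
    {N : Type*} [AddCommGroup N] [Module R N] (x : N)
    (hx : (1 : Localization p) ⊗ₜ[R] x = 0) : ∃ s : p, (s : R) • x = 0 := by
  have hbc : IsBaseChange (Localization p) (LocalizedModule.mkLinearMap p N) :=
    IsLocalizedModule.isBaseChange p (Localization p) _
  have h0 : hbc.equiv ((1 : Localization p) ⊗ₜ[R] x) = 0 := by rw [hx]; simp
  rw [hbc.equiv_tmul, one_smul] at h0
  have h1 : LocalizedModule.mk x (1 : p) = LocalizedModule.mk (0 : N) (1 : p) := by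
    rw [LocalizedModule.zero_mk]
    exact h0
  obtain ⟨u, hu⟩ := LocalizedModule.mk_eq.mp h1
  refine ⟨u, ?_⟩
  have := hu
  simp only [one_smul, smul_zero] at this
  rw [Submonoid.smul_def] at this
  exact this

section Main

variable {R T : Type*} [CommRing R] [CommRing T] [Algebra R T] (b : R)

section Hyps

variable (hinj : Function.Injective (algebraMap R T))
  (hbR : b ∈ nonZeroDivisors R)
  (hbT : algebraMap R T b ∈ nonZeroDivisors T)
  (hcapT : ∀ r : R, algebraMap R T r ∈ Ideal.span {algebraMap R T b} → r ∈ Ideal.span {b})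
  (hquotT : ∀ t : T, ∃ r : R, t - algebraMap R T r ∈ Ideal.span {algebraMap R T b})

include hbT hcapT in
lemma hdiv (t : T) (r : R) (h : algebraMap R T r = algebraMap R T b * t) :
    ∃ r' : R, algebraMap R T r' = t := by
  have hr : r ∈ Ideal.span {b} := hcapT r (Ideal.mem_span_singleton.mpr ⟨t, h⟩)
  obtain ⟨r', hr'⟩ := Ideal.mem_span_singleton.mp hr
  refine ⟨r', ?_⟩
  have h2 : algebraMap R T b * algebraMap R T r' = algebraMap R T b * t := by
    rw [← map_mul, ← hr', h]
  exact (mul_cancel_left_mem_nonZeroDivisors hbT).mp h2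

include hquotT in
lemma hsur (t : T) : ∃ r u, t = algebraMap R T r + algebraMap R T b * u := by
  obtain ⟨r, hr⟩ := hquotT t
  obtain ⟨u, hu⟩ := Ideal.mem_span_singleton.mp hr
  exact ⟨r, u, by linear_combination hu⟩

include hinj hbR hbT hcapT hquotT in
/-- `T ⊗ I` is `b`-torsion-free. -/
lemma torsion_free (I : Ideal R) (x : T ⊗[R] ↥I) (hx : b • x = 0) : x = 0 := by
  classical
  set f : R →ₗ[R] T := Algebra.linearMap R T with hf
  set K : Submodule R T := LinearMap.range f with hK
  -- b acts bijectively on T ⧸ K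
  have hbij : Function.Bijective (b • (LinearMap.id : (T ⧸ K) →ₗ[R] (T ⧸ K))) := by
    constructor
    · rw [injective_iff_map_eq_zero]
      intro m hm
      obtain ⟨t, rfl⟩ := Submodule.mkQ_surjective K m
      have hm' : (b • (LinearMap.id : (T ⧸ K) →ₗ[R] (T ⧸ K))) (K.mkQ t)
          = K.mkQ (algebraMap R T b * t) := by
        rw [LinearMap.smul_apply, LinearMap.id_apply, Submodule.mkQ_apply, Submodule.mkQ_apply,
          ← Submodule.Quotient.mk_smul, Algebra.smul_def]
      rw [hm', Submodule.mkQ_apply, Submodule.Quotient.mk_eq_zero] at hm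
      obtain ⟨r, hr⟩ := hm
      obtain ⟨r', hr'⟩ := hdiv b hbT hcapT t r (by simpa [hf, Algebra.linearMap_apply] using hr)
      rw [Submodule.mkQ_apply, Submodule.Quotient.mk_eq_zero]
      exact ⟨r', by simpa [hf, Algebra.linearMap_apply] using hr'⟩
    · intro m
      obtain ⟨t, rfl⟩ := Submodule.mkQ_surjective K m
      obtain ⟨r, u, hu⟩ := hsur b hquotT t
      refine ⟨K.mkQ u, ?_⟩
      have h1 : (b • (LinearMap.id : (T ⧸ K) →ₗ[R] (T ⧸ K))) (K.mkQ u)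
          = K.mkQ (algebraMap R T b * u) := by
        rw [LinearMap.smul_apply, LinearMap.id_apply, Submodule.mkQ_apply, Submodule.mkQ_apply,
          ← Submodule.Quotient.mk_smul, Algebra.smul_def]
      rw [h1, hu]
      have h2 : K.mkQ (algebraMap R T r + algebraMap R T b * u)
          = K.mkQ (algebraMap R T r) + K.mkQ (algebraMap R T b * u) := by
        rw [map_add]
      rw [h2]
      have h3 : K.mkQ (algebraMap R T r) = 0 := by
        rw [Submodule.mkQ_apply, Submodule.Quotient.mk_eq_zero]
        exact ⟨r, rfl⟩
      rw [h3, zero_add]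
  set e : (T ⧸ K) ≃ₗ[R] (T ⧸ K) := LinearEquiv.ofBijective _ hbij with he
  -- smul as rTensor
  have hsm : ∀ z : (T ⧸ K) ⊗[R] ↥I,
      rTensor ↥I (b • (LinearMap.id : (T ⧸ K) →ₗ[R] (T ⧸ K))) z = b • z := by
    intro z
    induction z using TensorProduct.induction_on with
    | zero => simp
    | tmul m i => simp [smul_tmul']
    | add a c ha hc => rw [map_add, ha, hc, smul_add]
  have hinj2 : Function.Injective
      (rTensor ↥I (b • (LinearMap.id : (T ⧸ K) →ₗ[R] (T ⧸ K)))) := by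
    have hco : (e.symm.toLinearMap).comp (b • (LinearMap.id : (T ⧸ K) →ₗ[R] (T ⧸ K)))
        = LinearMap.id := by
      refine LinearMap.ext fun z => ?_
      exact e.symm_apply_apply z
    intro z w hzw
    have h1 := congrArg (rTensor ↥I e.symm.toLinearMap) hzw
    rwa [← rTensor_comp_apply, ← rTensor_comp_apply, hco, rTensor_id, LinearMap.id_apply,
      LinearMap.id_apply] at h1
  -- image of x in (T ⧸ K) ⊗ I is zero
  have hqx : rTensor ↥I K.mkQ x = 0 := by
    apply hinj2
    rw [map_zero, hsm, ← map_smul, hx, map_zero]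
  -- exactness
  have hex : Function.Exact (rTensor ↥I f) (rTensor ↥I K.mkQ) :=
    rTensor_exact ↥I (f.exact_map_mkQ_range) (Submodule.mkQ_surjective K)
  obtain ⟨y, hy⟩ := (hex x).mp hqx
  -- scalar extraction map
  set j : R ⊗[R] ↥I →ₗ[R] R := I.subtype ∘ₗ (TensorProduct.lid R ↥I).toLinearMap with hj
  set εT : T ⊗[R] ↥I →ₗ[R] T :=
    TensorProduct.lift (((LinearMap.lsmul R T).flip).compl₂ I.subtype) with hε
  have hcomm : ∀ z : R ⊗[R] ↥I, εT (rTensor ↥I f z) = algebraMap R T (j z) := by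
    intro z
    induction z using TensorProduct.induction_on with
    | zero => simp
    | tmul r i =>
        simp only [rTensor_tmul, hε, TensorProduct.lift.tmul, hj, LinearMap.coe_comp,
          Function.comp_apply, LinearEquiv.coe_coe, TensorProduct.lid_tmul,
          LinearMap.compl₂_apply, LinearMap.flip_apply, LinearMap.lsmul_apply,
          Submodule.coe_subtype, SetLike.val_smul, smul_eq_mul]
        rw [Algebra.smul_def, hf, Algebra.linearMap_apply, ← map_mul, mul_comm]
    | add u v hu hv => simp only [map_add, hu, hv]
  have hjy : algebraMap R T (j (b • y)) = 0 := by
    rw [← hcomm, map_smul, hy, hx, map_zero]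
  have hjy0 : j (b • y) = 0 := by
    apply hinj
    rw [hjy, map_zero]
  rw [map_smul, smul_eq_mul] at hjy0
  have hjy1 : j y = 0 := by
    have := hbR.2 (j y) (by rw [mul_comm]; exact hjy0)
    exact this
  have hy0 : y = 0 := by
    have hjinj : Function.Injective j := by
      rw [hj]
      exact Subtype.val_injective.comp (TensorProduct.lid R ↥I).injective
    apply hjinj
    rw [hjy1, map_zero]
  rw [← hy, hy0, map_zero]

include hinj hbR hbT hcapT hquotT in
lemma pow_torsion_free (I : Ideal R) (n : ℕ) (x : T ⊗[R] ↥I) (hx : b ^ n • x = 0) : x = 0 := by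
  induction n generalizing x with
  | zero => simpa using hx
  | succ n ih =>
      have h1 : b ^ n • (b • x) = 0 := by
        rw [← mul_smul, ← pow_succ]
        exact hx
      exact torsion_free b hinj hbR hbT hcapT hquotT I x (ih (b • x) h1)

include hinj hbR hbT hcapT hquotT in
/-- Hard direction of (1): if `T[1/b]` is flat over `R` then so is `T`. -/
theorem flat_of_flat_loc (L : Type*) [CommRing L] [Algebra T L]
    [IsLocalization.Away (algebraMap R T b) L] [Algebra R L] [IsScalarTower R T L]
    (hfl : Module.Flat R L) : Module.Flat R T := by
  classical
  set bT : T := algebraMap R T b with hbTdef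
  set gR : T →ₗ[R] L := (IsScalarTower.toAlgHom R T L).toLinearMap with hgRdef
  have hgR : ∀ t : T, gR t = algebraMap T L t := fun t => rfl
  have hunit : IsUnit (algebraMap T L bT) :=
    IsLocalization.map_units (M := Submonoid.powers bT) L ⟨bT, Submonoid.mem_powers bT⟩
  have hend : ∀ (k : ℕ) (z : L), (algebraMap R (Module.End R L) (b ^ k)) z
      = algebraMap T L bT ^ k * z := by
    intro k z
    rw [Module.algebraMap_end_apply, Algebra.smul_def, map_pow,
      IsScalarTower.algebraMap_apply R T L]
  haveI hlocmod : IsLocalizedModule (Submonoid.powers b) gR := by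
    constructor
    · rintro ⟨s, n, rfl⟩
      show IsUnit (algebraMap R (Module.End R L) (b ^ n))
      rw [Module.End.isUnit_iff]
      constructor
      · intro z w hzw
        rw [hend n z, hend n w] at hzw
        exact (hunit.pow n).mul_left_cancel hzw
      · intro z
        obtain ⟨u, hu⟩ := hunit.pow n
        refine ⟨(u⁻¹ : Lˣ) * z, ?_⟩
        rw [hend, ← hu, ← mul_assoc, Units.mul_inv, one_mul]
    · intro y
      obtain ⟨⟨t, s⟩, hy⟩ := IsLocalization.surj (Submonoid.powers bT) y
      obtain ⟨n, hn⟩ := s.2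
      have hn' : bT ^ n = (s : T) := hn
      refine ⟨(t, ⟨b ^ n, pow_mem (Submonoid.mem_powers b) n⟩), ?_⟩
      show (b ^ n : R) • y = gR t
      rw [Algebra.smul_def, map_pow, IsScalarTower.algebraMap_apply R T L, ← map_pow, hn', hgR]
      rw [mul_comm]
      exact hy
    · intro t t' h
      have h' : algebraMap T L t = algebraMap T L t' := h
      obtain ⟨c, hc⟩ := (IsLocalization.eq_iff_exists (Submonoid.powers bT) L).mp h'
      obtain ⟨n, hn⟩ := c.2
      have hn' : bT ^ n = (c : T) := hn
      refine ⟨⟨b ^ n, pow_mem (Submonoid.mem_powers b) n⟩, ?_⟩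
      show (b ^ n : R) • t = (b ^ n : R) • t'
      rw [Algebra.smul_def, Algebra.smul_def, map_pow]
      rw [show (algebraMap R T b) = bT from rfl, hn']
      exact hc
  set Rb := Localization.Away b with hRbdef
  have hunit' : IsUnit (algebraMap R L b) := by
    rw [IsScalarTower.algebraMap_apply R T L]; exact hunit
  letI : Algebra Rb L := (Localization.awayLift (algebraMap R L) b hunit').toAlgebra
  haveI : IsScalarTower R Rb L := IsScalarTower.of_algebraMap_eq fun r => by
    rw [RingHom.algebraMap_toAlgebra]
    exact (IsLocalization.Away.lift_eq b hunit' r).symm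
  have hbc : IsBaseChange Rb gR :=
    ((isLocalizedModule_iff_isBaseChange (Submonoid.powers b) Rb gR).mp hlocmod)
  rw [Module.Flat.iff_lTensor_injective']
  intro I
  rw [injective_iff_map_eq_zero]
  intro x hx
  have hsq : lTensor L I.subtype ∘ₗ rTensor ↥I gR = rTensor R gR ∘ₗ lTensor T I.subtype := by
    rw [lTensor_comp_rTensor, rTensor_comp_lTensor]
  have hLI : lTensor L I.subtype (rTensor ↥I gR x) = 0 := by
    rw [← comp_apply, hsq, comp_apply, hx, map_zero]
  have hx0 : rTensor ↥I gR x = 0 := by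
    have hI := (Module.Flat.iff_lTensor_injective' (R := R) (M := L)).mp hfl I
    apply hI
    rw [hLI, map_zero]
  set ψ : L ⊗[R] ↥I ≃ₗ[R] Rb ⊗[R] (T ⊗[R] ↥I) :=
    (TensorProduct.congr (hbc.equiv.restrictScalars R).symm (LinearEquiv.refl R ↥I)) ≪≫ₗ
      TensorProduct.assoc R Rb T ↥I with hψdef
  have hψ : ∀ z : T ⊗[R] ↥I, ψ (rTensor ↥I gR z) = (1 : Rb) ⊗ₜ[R] z := by
    intro z
    induction z using TensorProduct.induction_on with
    | zero => simp
    | tmul t i =>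
        have h1 : (hbc.equiv.restrictScalars R).symm (gR t) = (1 : Rb) ⊗ₜ[R] t :=
          hbc.equiv_symm_apply t
        simp only [hψdef, rTensor_tmul, LinearEquiv.trans_apply, TensorProduct.congr_tmul,
          LinearEquiv.refl_apply, h1, TensorProduct.assoc_tmul]
    | add u v hu hv =>
        rw [map_add, map_add, hu, hv, TensorProduct.tmul_add]
  have h1x : (1 : Rb) ⊗ₜ[R] x = 0 := by
    rw [← hψ x, hx0, map_zero]
  obtain ⟨s, hs⟩ := smul_eq_zero_of_tmul_eq_zero (Submonoid.powers b) x h1x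
  obtain ⟨n, hn⟩ := s.2
  have hn' : b ^ n = (s : R) := hn
  refine pow_torsion_free b hinj hbR hbT hcapT hquotT I n x ?_
  rw [hn']
  exact hs

include hcapT hquotT in
/-- Purity: if `x` lands in `I·T` and `bⁿx ∈ I`, then `x ∈ I`. -/
theorem mem_of_mem_map [Module.Flat R T] (I : Ideal R) (x : R)
    (hxT : algebraMap R T x ∈ I.map (algebraMap R T))
    (hxb : ∃ n, b ^ n * x ∈ I) : x ∈ I := by
  classical
  set Q := R ⧸ (I : Submodule R R) with hQdef
  set xb : Q := Submodule.Quotient.mk x with hxbdef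
  -- Claim A: t ⊗ xb = 0 for all t
  have hA : ∀ t : T, t ⊗ₜ[R] xb = (0 : T ⊗[R] Q) := by
    intro t
    have hker : t ⊗ₜ[R] x ∈ LinearMap.ker (lTensor T (I : Submodule R R).mkQ) := by
      rw [lTensor_mkQ]
      have hxT' : algebraMap R T x ∈ Submodule.span T ((algebraMap R T) '' ↑I) := hxT
      obtain ⟨m, c, g, hsum⟩ := Submodule.mem_span_set'.mp hxT'
      have hgmem : ∀ i : Fin m, ∃ a : R, a ∈ I ∧ algebraMap R T a = (g i : T) := by
        intro i
        obtain ⟨a, ha, hfa⟩ := (g i).2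
        exact ⟨a, ha, hfa⟩
      choose a ha hfa using hgmem
      refine ⟨∑ i : Fin m, (t * c i) ⊗ₜ[R] (⟨a i, ha i⟩ : ↥I), ?_⟩
      rw [map_sum]
      have hterm : ∀ i : Fin m, lTensor T (I : Submodule R R).subtype
          ((t * c i) ⊗ₜ[R] (⟨a i, ha i⟩ : ↥I))
          = (algebraMap R T (a i) * (t * c i)) ⊗ₜ[R] (1 : R) := by
        intro i
        rw [lTensor_tmul]
        have h1 : ((⟨a i, ha i⟩ : ↥I) : R) = (a i) • (1 : R) := by
          simp
        show (t * c i) ⊗ₜ[R] ((⟨a i, ha i⟩ : ↥I) : R) = _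
        rw [h1, ← TensorProduct.smul_tmul, Algebra.smul_def]
      rw [Finset.sum_congr rfl (fun i _ => hterm i)]
      have h2 : t ⊗ₜ[R] x = (algebraMap R T x * t) ⊗ₜ[R] (1 : R) := by
        calc t ⊗ₜ[R] (x : R) = t ⊗ₜ[R] (x • (1 : R)) := by rw [smul_eq_mul, mul_one]
          _ = x • (t ⊗ₜ[R] (1 : R)) := by rw [TensorProduct.tmul_smul]
          _ = (x • t) ⊗ₜ[R] (1 : R) := by rw [TensorProduct.smul_tmul']
          _ = (algebraMap R T x * t) ⊗ₜ[R] (1 : R) := by rw [Algebra.smul_def]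
      rw [h2, ← hsum]
      rw [Finset.sum_mul, TensorProduct.sum_tmul]
      refine Finset.sum_congr rfl fun i _ => ?_
      rw [smul_eq_mul, ← hfa i]
      ring_nf
    have h0 := hker
    rw [LinearMap.mem_ker, lTensor_tmul] at h0
    exact h0
  set N : Submodule R Q := Submodule.span R {xb} with hNdef
  -- Claim B: T ⊗ N = 0
  have hsub : ∀ z : T ⊗[R] ↥N, z = 0 := by
    have hinjN : Function.Injective (lTensor T N.subtype) :=
      Module.Flat.lTensor_preserves_injective_linearMap N.subtype N.injective_subtype
    intro z
    apply hinjN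
    rw [map_zero]
    induction z using TensorProduct.induction_on with
    | zero => simp
    | tmul t nv =>
        obtain ⟨cm, hcm⟩ := Submodule.mem_span_singleton.mp nv.2
        rw [lTensor_tmul]
        show t ⊗ₜ[R] ((nv : Q)) = 0
        rw [← hcm, TensorProduct.tmul_smul, TensorProduct.smul_tmul']
        exact hA (cm • t)
    | add u v hu hv => rw [map_add, hu, hv, add_zero]
  -- T ⧸ bT ≅ R ⧸ bR
  set bT : T := algebraMap R T b with hbTdef
  set BT : Submodule R T := (Ideal.span {bT}).restrictScalars R with hBTdef
  set Jb : Ideal R := Ideal.span {b} with hJbdef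
  have hle : (Jb : Submodule R R) ≤ Submodule.comap (Algebra.linearMap R T) BT := by
    rw [hJbdef, Ideal.span, Submodule.span_le]
    rintro y rfl
    simp only [Submodule.mem_comap, Algebra.linearMap_apply, hBTdef,
      Submodule.restrictScalars_mem]
    exact Ideal.mem_span_singleton_self bT
  set e2 : (R ⧸ (Jb : Submodule R R)) →ₗ[R] (T ⧸ BT) :=
    Submodule.mapQ _ _ (Algebra.linearMap R T) hle with he2def
  have he2 : Function.Bijective e2 := by
    constructor
    · rw [injective_iff_map_eq_zero]
      intro m hm
      obtain ⟨r, rfl⟩ := Submodule.mkQ_surjective _ m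
      rw [Submodule.mkQ_apply, Submodule.mapQ_apply, Submodule.Quotient.mk_eq_zero] at hm
      rw [Submodule.mkQ_apply, Submodule.Quotient.mk_eq_zero]
      exact hcapT r hm
    · intro m
      obtain ⟨t, rfl⟩ := Submodule.mkQ_surjective _ m
      obtain ⟨r, hr⟩ := hquotT t
      refine ⟨Submodule.Quotient.mk r, ?_⟩
      rw [Submodule.mkQ_apply, Submodule.mapQ_apply, Algebra.linearMap_apply]
      rw [Submodule.Quotient.eq]
      have h4 : algebraMap R T r - t = -(t - algebraMap R T r) := by ring
      rw [h4]
      exact BT.neg_mem hr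
  have hTB : ∀ w : (T ⧸ BT) ⊗[R] ↥N, w = 0 := by
    intro w
    obtain ⟨z, rfl⟩ := rTensor_surjective ↥N (Submodule.mkQ_surjective BT) w
    rw [hsub z, map_zero]
  set E2 : (R ⧸ (Jb : Submodule R R)) ≃ₗ[R] (T ⧸ BT) := LinearEquiv.ofBijective e2 he2
  have hRB : ∀ w : (R ⧸ (Jb : Submodule R R)) ⊗[R] ↥N, w = 0 := by
    intro w
    have h1 : (TensorProduct.congr E2 (LinearEquiv.refl R ↥N)) w = 0 := hTB _
    exact (TensorProduct.congr E2 (LinearEquiv.refl R ↥N)).map_eq_zero_iff.mp h1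
  have hNQ : ∀ u : (↥N ⧸ (Jb • (⊤ : Submodule R ↥N))), u = 0 := by
    intro u
    have h1 := hRB ((TensorProduct.quotTensorEquivQuotSMul ↥N Jb).symm u)
    have h2 := congrArg (TensorProduct.quotTensorEquivQuotSMul ↥N Jb) h1
    rwa [LinearEquiv.apply_symm_apply, map_zero] at h2
  have htop : Jb • (⊤ : Submodule R ↥N) = ⊤ := by
    rw [← Submodule.Quotient.subsingleton_iff]
    exact subsingleton_of_forall_eq 0 fun y => hNQ y
  have hxN : (⟨xb, Submodule.mem_span_singleton_self xb⟩ : ↥N) ∈ Jb • (⊤ : Submodule R ↥N) := by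
    rw [htop]; exact Submodule.mem_top
  have hex : ∃ c : R, xb = b • (c • xb) := by
    have hP : ∀ w : ↥N, w ∈ Jb • (⊤ : Submodule R ↥N) → ∃ c : R, (w : Q) = b • (c • xb) := by
      intro w hw
      refine Submodule.smul_induction_on hw ?_ ?_
      · intro r hr n _
        obtain ⟨c', hc'⟩ := Ideal.mem_span_singleton.mp hr
        obtain ⟨d, hd⟩ := Submodule.mem_span_singleton.mp n.2
        refine ⟨c' * d, ?_⟩
        have h1 : ((r • n : ↥N) : Q) = r • (n : Q) := rfl
        rw [h1, ← hd, hc']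
        rw [smul_smul, smul_smul, mul_assoc]
      · rintro y z ⟨cy, hy⟩ ⟨cz, hz⟩
        refine ⟨cy + cz, ?_⟩
        have h1 : ((y + z : ↥N) : Q) = (y : Q) + (z : Q) := rfl
        rw [h1, hy, hz, add_smul, smul_add]
    obtain ⟨c, hc⟩ := hP _ hxN
    exact ⟨c, hc⟩
  obtain ⟨c, hxbc⟩ := hex
  have hmem : x - b * (c * x) ∈ I := by
    have h1 : (Submodule.Quotient.mk x : Q) = Submodule.Quotient.mk (b * (c * x)) := by
      have h2 : b • (c • xb) = (Submodule.Quotient.mk (b * (c * x)) : Q) := by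
        rw [hxbdef, ← Submodule.Quotient.mk_smul, ← Submodule.Quotient.mk_smul]
        simp [smul_eq_mul]
      rw [← h2]
      exact hxbc
    rwa [Submodule.Quotient.eq] at h1
  obtain ⟨n, hn⟩ := hxb
  have h1 : x * (b * c) ^ n ∈ I := by
    have h2 : x * (b * c) ^ n = c ^ n * (b ^ n * x) := by ring
    rw [h2]
    exact I.mul_mem_left _ hn
  have h2 : x * (1 - (b * c) ^ n) ∈ I := by
    have hgeo : (1 : R) - (b * c) ^ n = (∑ i ∈ Finset.range n, (b * c) ^ i) * (1 - b * c) := by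
      have h3 := geom_sum_mul (b * c) n
      linear_combination h3
    have h4 : x * (1 - (b * c) ^ n)
        = (∑ i ∈ Finset.range n, (b * c) ^ i) * (x - b * (c * x)) := by
      rw [hgeo]; ring
    rw [h4]
    exact I.mul_mem_left _ hmem
  have h5 : x = x * (b * c) ^ n + x * (1 - (b * c) ^ n) := by ring
  rw [h5]
  exact I.add_mem h1 h2

lemma exists_pow_mul_mem (I : Ideal R) (x : R)
    (h : algebraMap R (Localization.Away b) x ∈ I.map (algebraMap R (Localization.Away b))) :
    ∃ n, b ^ n * x ∈ I := by
  obtain ⟨⟨y, s⟩, hy⟩ := (IsLocalization.mem_map_algebraMap_iff (Submonoid.powers b) _).mp h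
  rw [← map_mul] at hy
  obtain ⟨c, hc⟩ := (IsLocalization.eq_iff_exists (Submonoid.powers b) _).mp hy
  obtain ⟨m, hm⟩ := c.2
  obtain ⟨k, hk⟩ := s.2
  refine ⟨m + k, ?_⟩
  have h1 : b ^ (m + k) * x = (c : R) * (x * (s : R)) := by
    rw [← hm, ← hk]; ring
  rw [h1, hc]
  exact I.mul_mem_left _ y.2

end Hyps

end Main

theorem statement18 (T : Type) [CommRing T] (S : Subring T) (b : ↥S)
    -- `b` is a nonzerodivisor of `S` and of `T`
    (hbS : b ∈ nonZeroDivisors ↥S) (hbT : (b : T) ∈ nonZeroDivisors T)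
    -- `bS = bT ∩ S`
    (hcap : ∀ s : ↥S, ((s : T) ∈ Ideal.span {(b : T)}) ↔ s ∈ Ideal.span {b})
    -- the inclusion induces an isomorphism `S/bS = T/bT` (by `hcap`, the induced
    -- injective map is surjective)
    (hquot : Function.Surjective
      ((Ideal.Quotient.mk (Ideal.span {(b : T)})).comp S.subtype)) :
    -- (1) `T[1/b]` is flat over `S` iff `T` is flat over `S`
    (letI : Algebra ↥S T := S.subtype.toAlgebra
     letI : Algebra ↥S (Localization.Away (b : T)) :=
       ((algebraMap T (Localization.Away (b : T))).comp S.subtype).toAlgebra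
     (Module.Flat ↥S (Localization.Away (b : T)) ↔ Module.Flat ↥S T)) ∧
    -- (2) if `T` and `S[1/b]` are Noetherian and `T` is flat over `S`,
    --     then `S` is Noetherian
    (IsNoetherianRing T → IsNoetherianRing (Localization.Away b) →
      (letI : Algebra ↥S T := S.subtype.toAlgebra
       Module.Flat ↥S T) →
      IsNoetherianRing ↥S) := by
  letI : Algebra ↥S T := S.subtype.toAlgebra
  have halg : algebraMap ↥S T = S.subtype := rfl
  have hinj : Function.Injective (algebraMap ↥S T) := Subtype.val_injective
  have hbT' : algebraMap ↥S T b ∈ nonZeroDivisors T := hbT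
  have hcapT : ∀ r : ↥S, algebraMap ↥S T r ∈ Ideal.span {algebraMap ↥S T b} →
      r ∈ Ideal.span {b} := fun r hr => (hcap r).mp hr
  have hquotT : ∀ t : T, ∃ r : ↥S, t - algebraMap ↥S T r ∈
      Ideal.span {algebraMap ↥S T b} := by
    intro t
    obtain ⟨r, hr⟩ := hquot (Ideal.Quotient.mk (Ideal.span {(b : T)}) t)
    refine ⟨r, ?_⟩
    have h1 : Ideal.Quotient.mk (Ideal.span {(b : T)}) (S.subtype r)
        = Ideal.Quotient.mk (Ideal.span {(b : T)}) t := hr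
    have h2 : S.subtype r - t ∈ Ideal.span {(b : T)} :=
      Ideal.Quotient.mk_eq_mk_iff_sub_mem _ _ |>.mp h1
    have h3 : t - algebraMap ↥S T r = -(S.subtype r - t) := by
      rw [halg]; ring
    rw [h3]
    exact (Ideal.span {(b : T)}).neg_mem h2
  constructor
  · show Module.Flat ↥S (Localization.Away (b : T)) ↔ Module.Flat ↥S T
    let mL : Module ↥S (Localization.Away (b : T)) := inferInstance
    let mT : Module ↥S T := inferInstance
    suffices h : (@Module.Flat ↥S (Localization.Away (b : T)) _ _ mL ↔ @Module.Flat ↥S T _ _ mT) by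
      exact h
    letI algSL : Algebra ↥S (Localization.Away (b : T)) :=
      ((algebraMap T (Localization.Away (b : T))).comp S.subtype).toAlgebra
    have hmT : mT = (S.subtype.toAlgebra : Algebra ↥S T).toModule := Module.ext' _ _ fun r x => rfl
    have hmL : mL = algSL.toModule := Module.ext' _ _ fun r x => by
      induction x using Localization.induction_on with
      | H p =>
        rw [Algebra.smul_def]
        show _ = algebraMap T _ (r : T) * _
        rw [Localization.smul_mk, ← Localization.mk_one_eq_algebraMap, Localization.mk_mul, one_mul]
        rfl
    rw [hmT, hmL]
    haveI towerSTL : @IsScalarTower ↥S T (Localization.Away (b : T))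
        Algebra.toSMul Algebra.toSMul Algebra.toSMul :=
      IsScalarTower.of_algebraMap_eq fun r => rfl
    haveI hloc : IsLocalization.Away (algebraMap ↥S T b) (Localization.Away (b : T)) :=
      inferInstanceAs (IsLocalization (Submonoid.powers ((b : T))) _)
    constructor
    · intro hfl
      exact flat_of_flat_loc b hinj hbS hbT' hcapT hquotT (Localization.Away (b : T)) hfl
    · intro hfl
      haveI := hfl
      haveI hflatTL : Module.Flat T (Localization.Away (b : T)) :=
        Localization.flat (R := T) T (Submonoid.powers (b : T))
      exact @Module.Flat.trans ↥S T (Localization.Away (b : T)) _ _ _ _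
        algSL.toModule _ towerSTL hfl hflatTL
  · intro hT hRb hflat
    let mT : Module ↥S T := inferInstance
    have hflat0 : @Module.Flat ↥S T _ _ mT := hflat
    have hmT : mT = (S.subtype.toAlgebra : Algebra ↥S T).toModule := Module.ext' _ _ fun r x => rfl
    rw [hmT] at hflat0
    haveI hflat' : Module.Flat ↥S T := hflat0
    apply isNoetherianRing_iff.mpr
    rw [← monotone_stabilizes_iff_noetherian]
    intro f
    have hNT : IsNoetherian T T := isNoetherianRing_iff.mp hT
    have hNb : IsNoetherian (Localization.Away b) (Localization.Away b) :=
      isNoetherianRing_iff.mp hRb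
    obtain ⟨n1, h1⟩ := monotone_stabilizes_iff_noetherian.mpr hNT
      (⟨fun k => (Ideal.map (algebraMap ↥S T) (f k) : Ideal T),
        fun p q hpq => Ideal.map_mono (f.mono hpq)⟩ : ℕ →o Ideal T)
    obtain ⟨n2, h2⟩ := monotone_stabilizes_iff_noetherian.mpr hNb
      (⟨fun k => (Ideal.map (algebraMap ↥S (Localization.Away b)) (f k) : Ideal (Localization.Away b)),
        fun p q hpq => Ideal.map_mono (f.mono hpq)⟩ : ℕ →o Ideal (Localization.Away b))
    refine ⟨max n1 n2, fun m hm => ?_⟩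
    apply le_antisymm (f.mono hm)
    intro x hx
    have hmapT : Ideal.map (algebraMap ↥S T) (f m)
        = Ideal.map (algebraMap ↥S T) (f (max n1 n2)) := by
      have ha := h1 m (le_trans (le_max_left n1 n2) hm)
      have hb := h1 (max n1 n2) (le_max_left n1 n2)
      exact (ha.symm.trans hb : _)
    have hmapb : Ideal.map (algebraMap ↥S (Localization.Away b)) (f m)
        = Ideal.map (algebraMap ↥S (Localization.Away b)) (f (max n1 n2)) := by
      have ha := h2 m (le_trans (le_max_right n1 n2) hm)
      have hb := h2 (max n1 n2) (le_max_right n1 n2)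
      exact (ha.symm.trans hb : _)
    have hxT : algebraMap ↥S T x ∈ Ideal.map (algebraMap ↥S T) (f (max n1 n2)) := by
      rw [← hmapT]
      exact Ideal.mem_map_of_mem _ hx
    have hxb : algebraMap ↥S (Localization.Away b) x
        ∈ Ideal.map (algebraMap ↥S (Localization.Away b)) (f (max n1 n2)) := by
      rw [← hmapb]
      exact Ideal.mem_map_of_mem _ hx
    obtain ⟨k, hk⟩ := exists_pow_mul_mem b (f (max n1 n2)) x hxb
    exact mem_of_mem_map b hcapT hquotT (f (max n1 n2)) x hxT ⟨k, hk⟩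

end HRW18
end
end
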